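/- Let (Ω, F, P) be a probability space, β, γ > 0, and for α > 0 define the entropic risk measure ξ_α(X) = (1/α) log E[e^{αX}] on the space of X where the expectation is finite. Then the infimal convolution of ξ_β and ξ_γ equals ξ_{βγ/(β+γ)}: for all X, inf{ξ_β(X₁) + ξ_γ(X₂) | X₁ + X₂ = X} = ξ_{βγ/(β+γ)}(X), and the infimum is attained by X₁ = (γ/(β+γ))X, X₂ = (β/(β+γ))X. -/

import Mathlib

open MeasureTheory

/-- The entropic risk measure with parameter `α`:
`ξ_α(X) = (1/α) log E[e^{αX}] ∈ (-∞, ∞]`. -/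
noncomputable def entropic {Ω : Type*} [MeasurableSpace Ω] (μ : Measure Ω)
    (α : ℝ) (X : Ω → ℝ) : EReal :=
  ((1 / α : ℝ) : EReal) * ENNReal.log (∫⁻ ω, ENNReal.ofReal (Real.exp (α * X ω)) ∂μ)

private lemma ereal_mul_ne_bot {c : ℝ} (hc : 0 < c) {a : EReal} (ha : a ≠ ⊥) :
    (c : EReal) * a ≠ ⊥ := by
  induction a using EReal.rec with
  | bot => exact absurd rfl ha
  | coe x => rw [← EReal.coe_mul]; exact EReal.coe_ne_bot _
  | top => rw [EReal.coe_mul_top_of_pos hc]; simp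

private lemma ereal_mul_add {c : ℝ} (hc : 0 < c) {u v : EReal} (hu : u ≠ ⊥) (hv : v ≠ ⊥) :
    (c : EReal) * (u + v) = c * u + c * v := by
  induction u using EReal.rec with
  | bot => exact absurd rfl hu
  | coe x =>
    induction v using EReal.rec with
    | bot => exact absurd rfl hv
    | coe y => rw [← EReal.coe_add, ← EReal.coe_mul, ← EReal.coe_mul, ← EReal.coe_mul,
        ← EReal.coe_add, mul_add]
    | top =>
      rw [EReal.add_top_of_ne_bot (EReal.coe_ne_bot x), EReal.coe_mul_top_of_pos hc,
        EReal.add_top_of_ne_bot (ereal_mul_ne_bot hc (EReal.coe_ne_bot x))]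
  | top =>
    rw [EReal.top_add_of_ne_bot hv, EReal.coe_mul_top_of_pos hc,
      EReal.top_add_of_ne_bot (ereal_mul_ne_bot hc hv)]

private lemma ereal_add_mul {c d : ℝ} (hc : 0 < c) (hd : 0 < d) {L : EReal} (hL : L ≠ ⊥) :
    (c : EReal) * L + (d : EReal) * L = ((c + d : ℝ) : EReal) * L := by
  induction L using EReal.rec with
  | bot => exact absurd rfl hL
  | coe x => rw [← EReal.coe_mul, ← EReal.coe_mul, ← EReal.coe_mul, ← EReal.coe_add, add_mul]
  | top =>
    rw [EReal.coe_mul_top_of_pos hc, EReal.coe_mul_top_of_pos hd,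
      EReal.coe_mul_top_of_pos (by linarith), EReal.top_add_top]

private lemma lint_exp_pos {Ω : Type*} [MeasurableSpace Ω] (μ : Measure Ω)
    [IsProbabilityMeasure μ] (c : ℝ) (Y : Ω → ℝ) (hY : AEMeasurable Y μ) :
    0 < ∫⁻ ω, ENNReal.ofReal (Real.exp (c * Y ω)) ∂μ := by
  rw [pos_iff_ne_zero]
  intro h
  have hm : AEMeasurable (fun ω => ENNReal.ofReal (Real.exp (c * Y ω))) μ :=
    ENNReal.measurable_ofReal.comp_aemeasurable
      (Real.measurable_exp.comp_aemeasurable (hY.const_mul c))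
  rw [lintegral_eq_zero_iff' hm] at h
  obtain ⟨ω, hω⟩ := h.exists
  exact (ENNReal.ofReal_pos.2 (Real.exp_pos _)).ne' hω

private lemma exp_aemeasurable {Ω : Type*} [MeasurableSpace Ω] {μ : Measure Ω} (c : ℝ)
    {Y : Ω → ℝ} (hY : AEMeasurable Y μ) :
    AEMeasurable (fun ω => ENNReal.ofReal (Real.exp (c * Y ω))) μ :=
  ENNReal.measurable_ofReal.comp_aemeasurable
    (Real.measurable_exp.comp_aemeasurable (hY.const_mul c))

private lemma entropic_add_le {Ω : Type*} [MeasurableSpace Ω] (μ : Measure Ω)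
    [IsProbabilityMeasure μ] {β γ : ℝ} (hβ : 0 < β) (hγ : 0 < γ) (X₁ X₂ : Ω → ℝ)
    (h₁ : AEMeasurable X₁ μ) (h₂ : AEMeasurable X₂ μ) :
    entropic μ (β * γ / (β + γ)) (X₁ + X₂) ≤ entropic μ β X₁ + entropic μ γ X₂ := by
  have hβγ : 0 < β + γ := by linarith
  set α : ℝ := β * γ / (β + γ) with hα_def
  have hα : 0 < α := div_pos (mul_pos hβ hγ) hβγ
  set p : ℝ := (β + γ) / γ with hp_def
  set q : ℝ := (β + γ) / β with hq_def
  have hp : 0 < p := div_pos hβγ hγ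
  have hq : 0 < q := div_pos hβγ hβ
  have hpq : p.HolderConjugate q := by
    rw [Real.holderConjugate_iff]
    constructor
    · rw [hp_def, lt_div_iff₀ hγ]; linarith
    · rw [hp_def, hq_def]; field_simp; ring
  have hαp : α * p = β := by rw [hα_def, hp_def]; field_simp
  have hαq : α * q = γ := by rw [hα_def, hq_def]; field_simp
  set A := ∫⁻ ω, ENNReal.ofReal (Real.exp (β * X₁ ω)) ∂μ with hA_def
  set B := ∫⁻ ω, ENNReal.ofReal (Real.exp (γ * X₂ ω)) ∂μ with hB_def
  set C := ∫⁻ ω, ENNReal.ofReal (Real.exp (α * (X₁ + X₂) ω)) ∂μ with hC_def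
  have hA : 0 < A := lint_exp_pos μ β X₁ h₁
  have hB : 0 < B := lint_exp_pos μ γ X₂ h₂
  set f : Ω → ENNReal := fun ω => ENNReal.ofReal (Real.exp (α * X₁ ω)) with hf_def
  set g : Ω → ENNReal := fun ω => ENNReal.ofReal (Real.exp (α * X₂ ω)) with hg_def
  have key : C ≤ A ^ (1 / p) * B ^ (1 / q) := by
    calc C = ∫⁻ a, (f * g) a ∂μ := lintegral_congr fun a => by
            simp only [hf_def, hg_def, Pi.mul_apply, Pi.add_apply, mul_add, Real.exp_add,
              ENNReal.ofReal_mul (Real.exp_pos _).le]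
    _ ≤ (∫⁻ a, f a ^ p ∂μ) ^ (1 / p) * (∫⁻ a, g a ^ q ∂μ) ^ (1 / q) :=
          ENNReal.lintegral_mul_le_Lp_mul_Lq μ hpq (exp_aemeasurable α h₁) (exp_aemeasurable α h₂)
    _ = A ^ (1 / p) * B ^ (1 / q) := by
          congr 1
          · congr 1
            exact lintegral_congr fun a => by
              rw [hf_def, ENNReal.ofReal_rpow_of_pos (Real.exp_pos _), ← Real.exp_mul,
                mul_right_comm, hαp]
          · congr 1
            exact lintegral_congr fun a => by
              rw [hg_def, ENNReal.ofReal_rpow_of_pos (Real.exp_pos _), ← Real.exp_mul,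
                mul_right_comm, hαq]
  have hlog : ENNReal.log C ≤
      ((1 / p : ℝ) : EReal) * ENNReal.log A + ((1 / q : ℝ) : EReal) * ENNReal.log B := by
    calc ENNReal.log C ≤ ENNReal.log (A ^ (1 / p) * B ^ (1 / q)) := ENNReal.log_monotone key
    _ = _ := by rw [ENNReal.log_mul_add, ENNReal.log_rpow, ENNReal.log_rpow]
  have hlogA : ENNReal.log A ≠ ⊥ := fun h => hA.ne' (ENNReal.log_eq_bot_iff.1 h)
  have hlogB : ENNReal.log B ≠ ⊥ := fun h => hB.ne' (ENNReal.log_eq_bot_iff.1 h)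
  have hu : ((1 / p : ℝ) : EReal) * ENNReal.log A ≠ ⊥ :=
    ereal_mul_ne_bot (by positivity) hlogA
  have hv : ((1 / q : ℝ) : EReal) * ENNReal.log B ≠ ⊥ :=
    ereal_mul_ne_bot (by positivity) hlogB
  show ((1 / α : ℝ) : EReal) * ENNReal.log C ≤
      ((1 / β : ℝ) : EReal) * ENNReal.log A + ((1 / γ : ℝ) : EReal) * ENNReal.log B
  calc ((1 / α : ℝ) : EReal) * ENNReal.log C
      ≤ ((1 / α : ℝ) : EReal) *
        (((1 / p : ℝ) : EReal) * ENNReal.log A + ((1 / q : ℝ) : EReal) * ENNReal.log B) :=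
        mul_le_mul_of_nonneg_left hlog (EReal.coe_nonneg.2 (by positivity))
    _ = ((1 / α : ℝ) : EReal) * (((1 / p : ℝ) : EReal) * ENNReal.log A) +
        ((1 / α : ℝ) : EReal) * (((1 / q : ℝ) : EReal) * ENNReal.log B) :=
        ereal_mul_add (by positivity) hu hv
    _ = ((1 / β : ℝ) : EReal) * ENNReal.log A + ((1 / γ : ℝ) : EReal) * ENNReal.log B := by
        rw [← mul_assoc, ← mul_assoc, ← EReal.coe_mul, ← EReal.coe_mul,
          show (1 / α) * (1 / p) = 1 / β by rw [← hαp]; field_simp,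
          show (1 / α) * (1 / q) = 1 / γ by rw [← hαq]; field_simp]

/-- The infimal convolution of the entropic risk measures `ξ_β` and `ξ_γ` equals
`ξ_{βγ/(β+γ)}`, and the infimum is attained by the proportional split
`X₁ = (γ/(β+γ))X`, `X₂ = (β/(β+γ))X`. -/
theorem entropic_infConv {Ω : Type*} [MeasurableSpace Ω] (μ : Measure Ω)
    [IsProbabilityMeasure μ] (β γ : ℝ) (hβ : 0 < β) (hγ : 0 < γ)
    (X : Ω → ℝ) (hX : Integrable X μ) :
    sInf {s : EReal | ∃ X₁ X₂ : Ω → ℝ, Integrable X₁ μ ∧ Integrable X₂ μ ∧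
        X₁ + X₂ = X ∧ s = entropic μ β X₁ + entropic μ γ X₂} =
      entropic μ (β * γ / (β + γ)) X ∧
    entropic μ β ((γ / (β + γ)) • X) + entropic μ γ ((β / (β + γ)) • X) =
      entropic μ (β * γ / (β + γ)) X := by
  have hβγ : 0 < β + γ := by linarith
  set α : ℝ := β * γ / (β + γ) with hα_def
  have hα : 0 < α := div_pos (mul_pos hβ hγ) hβγ
  set L := ENNReal.log (∫⁻ ω, ENNReal.ofReal (Real.exp (α * X ω)) ∂μ) with hL_def
  have hLbot : L ≠ ⊥ := fun h =>
    (lint_exp_pos μ α X hX.aemeasurable).ne' (ENNReal.log_eq_bot_iff.1 h)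
  have e₁ : entropic μ β ((γ / (β + γ)) • X) = ((1 / β : ℝ) : EReal) * L := by
    unfold entropic
    rw [hL_def]
    congr 2
    exact lintegral_congr fun ω => by
      simp only [Pi.smul_apply, smul_eq_mul]
      congr 2
      rw [hα_def]; ring
  have e₂ : entropic μ γ ((β / (β + γ)) • X) = ((1 / γ : ℝ) : EReal) * L := by
    unfold entropic
    rw [hL_def]
    congr 2
    exact lintegral_congr fun ω => by
      simp only [Pi.smul_apply, smul_eq_mul]
      congr 2
      rw [hα_def]; ring
  have hattain : entropic μ β ((γ / (β + γ)) • X) + entropic μ γ ((β / (β + γ)) • X) =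
      entropic μ α X := by
    rw [e₁, e₂, ereal_add_mul (by positivity) (by positivity) hLbot,
      show (1 / β + 1 / γ : ℝ) = 1 / α by rw [hα_def]; field_simp; ring]
    rfl
  refine ⟨le_antisymm ?_ ?_, hattain⟩
  · rw [← hattain]
    refine sInf_le ⟨(γ / (β + γ)) • X, (β / (β + γ)) • X, hX.smul _, hX.smul _, ?_, rfl⟩
    funext ω
    simp only [Pi.add_apply, Pi.smul_apply, smul_eq_mul]
    field_simp
    ring
  · refine le_sInf ?_
    rintro s ⟨X₁, X₂, h₁, h₂, hsum, rfl⟩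
    have := entropic_add_le μ hβ hγ X₁ X₂ h₁.aemeasurable h₂.aemeasurable
    rwa [hsum] at this
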